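/- For any element x of a finite group G, the map y·C_G^⊗(x) ↦ y ⊗ x from C_G(x)/C_G^⊗(x) to J_2(G) is a well-defined injective group homomorphism. -/

import Mathlib

open scoped commutatorElement

/-- For any element `x` of a finite group `G`, the map
`y·C_G^⊗(x) ↦ y ⊗ x` from `C_G(x)/C_G^⊗(x)` into `J₂(G) = ker κ` is a well-defined
injective group homomorphism. The nonabelian tensor square is modelled by a group `T`
with pairing `t` and commutator homomorphism `κ`; `C_G^⊗(x)` is a normal subgroup of
`C_G(x)`. -/
theorem exists_injective_hom_centralizer_quotient_to_J2
    {G T : Type*} [Group G] [Finite G] [Group T] [Finite T]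
    (t : G → G → T) (κ : T →* G)
    (hκ : ∀ a b : G, κ (t a b) = ⁅a, b⁆)
    (hmul : ∀ x : G, ∀ a ∈ Subgroup.centralizer {x}, ∀ b ∈ Subgroup.centralizer {x},
      t (a * b) x = t a x * t b x)
    (x : G) (Cx : Subgroup G)
    (hCx : ∀ a : G, a ∈ Cx ↔ t a x = 1)
    (hle : Cx ≤ Subgroup.centralizer {x})
    [hnormal : (Cx.subgroupOf (Subgroup.centralizer {x})).Normal] :
    ∃ φ : (Subgroup.centralizer {x} ⧸ Cx.subgroupOf (Subgroup.centralizer {x})) →* κ.ker,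
      Function.Injective φ ∧
      ∀ y : Subgroup.centralizer {x}, (φ (QuotientGroup.mk y) : T) = t (y : G) x := by
  have hker : ∀ y : Subgroup.centralizer {x}, t (y : G) x ∈ κ.ker := by
    intro y
    have hc : x * (y : G) = (y : G) * x := y.2 x rfl
    rw [MonoidHom.mem_ker, hκ, commutatorElement_def, ← hc]; group
  let f : Subgroup.centralizer {x} →* κ.ker :=
    MonoidHom.mk' (fun y => ⟨t (y : G) x, hker y⟩) (by
      intro a b
      ext
      exact hmul x a a.2 b b.2)
  have hf1 : ∀ y ∈ Cx.subgroupOf (Subgroup.centralizer {x}), f y = 1 := by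
    intro y hy
    ext
    exact (hCx _).1 hy
  refine ⟨QuotientGroup.lift _ f (fun y hy => (MonoidHom.mem_ker).2 (hf1 y hy)), ?_, fun y => rfl⟩
  rw [injective_iff_map_eq_one]
  intro a ha
  induction a using QuotientGroup.induction_on with
  | H y =>
    rw [QuotientGroup.lift_mk'] at ha
    have : t (y : G) x = 1 := congrArg Subtype.val ha
    rw [QuotientGroup.eq_one_iff]
    exact (hCx _).2 this
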